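/- Let φ = (1+√5)/2, γ = (√5−1)/2, L(n) = ⌊nφ⌋, U(n) = ⌊nφ²⌋. Let W : ℕ → ℕ satisfy W(0) = 0 and, for all k ≥ 1, W(L(k)) = U(k) and W(U(k)) = L(k). Then for every n ≥ 0, W(0) + W(1) + ⋯ + W(n) = (n+1)·⌊(n+1)γ⌋; in particular the averaged Wythoff swap sequence (W(0)+⋯+W(n))/(n+1) equals Hofstadter's G-sequence G(n) = ⌊(n+1)γ⌋. -/

import Mathlib

set_option maxHeartbeats 1000000


/-- The averaged Wythoff swap sequence equals Hofstadter's G-sequence: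
if `W` is the Wythoff swap sequence (`W(0) = 0`, `W(L(k)) = U(k)` and
`W(U(k)) = L(k)` for `k ≥ 1`, where `L, U` are the lower and upper Wythoff
sequences), then `W(0) + ⋯ + W(n) = (n+1)·⌊(n+1)γ⌋` for all `n ≥ 0`, i.e.,
the average of the first `n+1` terms of `W` is `G(n) = ⌊(n+1)γ⌋`. -/
theorem averaged_wythoff_swap_eq_hofstadter_G
    (φ γ : ℝ) (hφ : φ = (1 + Real.sqrt 5) / 2) (hγ : γ = (Real.sqrt 5 - 1) / 2)
    (L U : ℕ → ℕ)
    (hL : ∀ n : ℕ, L n = ⌊(n : ℝ) * φ⌋₊)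
    (hU : ∀ n : ℕ, U n = ⌊(n : ℝ) * φ ^ 2⌋₊)
    (W : ℕ → ℕ) (hW0 : W 0 = 0)
    (hWL : ∀ k : ℕ, 1 ≤ k → W (L k) = U k)
    (hWU : ∀ k : ℕ, 1 ≤ k → W (U k) = L k) :
    ∀ n : ℕ, ∑ i ∈ Finset.range (n + 1), W i = (n + 1) * ⌊((n : ℝ) + 1) * γ⌋₊ := by
  have h5 : Real.sqrt 5 ^ 2 = 5 := Real.sq_sqrt (by norm_num)
  have hs0 : 0 ≤ Real.sqrt 5 := Real.sqrt_nonneg 5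
  have hs2 : 2 < Real.sqrt 5 := by nlinarith
  have hs3 : Real.sqrt 5 < 3 := by nlinarith
  have hγ0 : 0 < γ := by rw [hγ]; linarith
  have hγ1 : γ < 1 := by rw [hγ]; linarith
  have hφ0 : 0 < φ := by rw [hφ]; linarith
  have hmul : φ * γ = 1 := by rw [hφ, hγ]; nlinarith
  have hφ2 : φ ^ 2 = φ + 1 := by rw [hφ]; nlinarith
  have hγsq : γ ^ 2 = 1 - γ := by rw [hγ]; nlinarith
  have hγir : Irrational γ := by
    rw [hγ]
    have h1 : Irrational (Real.sqrt 5) := (by norm_num : Nat.Prime 5).irrational_sqrt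
    simpa using (h1.sub_natCast 1).div_natCast (by norm_num : (2:ℕ) ≠ 0)
  set A : ℕ → ℕ := fun n => ⌊((n : ℝ) + 1) * γ⌋₊ with hA
  have hxirr : ∀ n : ℕ, Irrational (((n : ℝ) + 1) * γ) := by
    intro n
    have := hγir.natCast_mul (m := (n + 1)) (by omega)
    simpa [Nat.cast_add] using this
  have hAlt : ∀ n : ℕ, ((A n : ℝ)) < ((n : ℝ) + 1) * γ := by
    intro n
    have hle : ((A n : ℝ)) ≤ ((n : ℝ) + 1) * γ := Nat.floor_le (by positivity)
    exact hle.lt_of_ne fun h => (hxirr n).ne_nat (A n) h.symm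
  have hAub : ∀ n : ℕ, ((n : ℝ) + 1) * γ < (A n : ℝ) + 1 := fun n => Nat.lt_floor_add_one _
  -- characterization of L
  have hLchar : ∀ k n : ℕ, (L k ≤ n ↔ k ≤ A n) := by
    intro k n
    rw [hL]
    constructor
    · intro h
      have h1 : (k : ℝ) * φ < (n : ℝ) + 1 := by
        have h0 : ⌊(k : ℝ) * φ⌋₊ < n + 1 := by omega
        have := (Nat.floor_lt (show (0:ℝ) ≤ (k : ℝ) * φ by positivity)).mp h0
        push_cast at this ⊢; linarith
      have h2 : (k : ℝ) < ((n : ℝ) + 1) * γ := by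
        have := mul_lt_mul_of_pos_right h1 hγ0
        calc (k : ℝ) = k * (φ * γ) := by rw [hmul]; ring
          _ = k * φ * γ := by ring
          _ < ((n : ℝ) + 1) * γ := this
      exact Nat.le_floor h2.le
    · intro h
      have h2 : (k : ℝ) < ((n : ℝ) + 1) * γ :=
        lt_of_le_of_lt (by exact_mod_cast h) (hAlt n)
      have h1 : (k : ℝ) * φ < (n : ℝ) + 1 := by
        have := mul_lt_mul_of_pos_right h2 hφ0
        have e : ((n : ℝ) + 1) * γ * φ = (n : ℝ) + 1 := by
          rw [mul_assoc, mul_comm γ φ, hmul, mul_one]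
        nlinarith
      have : ⌊(k : ℝ) * φ⌋₊ < n + 1 := (Nat.floor_lt (by positivity)).mpr (by push_cast; linarith)
      omega
  -- characterization of U
  have hUchar : ∀ k n : ℕ, (U k ≤ n ↔ k + A n ≤ n) := by
    intro k n
    rw [hU]
    have key : (k : ℝ) * φ ^ 2 < (n : ℝ) + 1 ↔ (k : ℝ) < ((n : ℝ) + 1) * (1 - γ) := by
      constructor
      · intro h
        have := mul_lt_mul_of_pos_right h (by positivity : (0:ℝ) < γ ^ 2)
        have e : (k : ℝ) * φ ^ 2 * γ ^ 2 = k := by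
          have : φ ^ 2 * γ ^ 2 = (φ * γ) ^ 2 := by ring
          rw [mul_assoc, this, hmul]; ring
        rw [e] at this
        calc (k : ℝ) < ((n:ℝ)+1) * γ ^ 2 := this
          _ = ((n:ℝ)+1) * (1 - γ) := by rw [hγsq]
      · intro h
        have h' : (k : ℝ) < ((n:ℝ)+1) * γ ^ 2 := by rw [hγsq]; exact h
        have := mul_lt_mul_of_pos_right h' (by positivity : (0:ℝ) < φ ^ 2)
        have e : ((n:ℝ)+1) * γ ^ 2 * φ ^ 2 = (n:ℝ)+1 := by
          have : γ ^ 2 * φ ^ 2 = (φ * γ) ^ 2 := by ring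
          rw [mul_assoc, this, hmul]; ring
        rw [e] at this; nlinarith
    constructor
    · intro h
      have h1 : (k : ℝ) * φ ^ 2 < (n : ℝ) + 1 := by
        have h0 : ⌊(k : ℝ) * φ ^ 2⌋₊ < n + 1 := by omega
        have := (Nat.floor_lt (show (0:ℝ) ≤ (k : ℝ) * φ ^ 2 by positivity)).mp h0
        push_cast at this ⊢; linarith
      have h2 := key.mp h1
      -- k < (n+1)(1-γ) ⟹ k + (n+1)γ < n+1 ⟹ k + A n < n+1
      have h3 : (k : ℝ) + (A n : ℝ) < (n : ℝ) + 1 := by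
        have := hAlt n; nlinarith
      have : ((k + A n : ℕ) : ℝ) < ((n + 1 : ℕ) : ℝ) := by push_cast; linarith
      have := Nat.cast_lt.mp this
      omega
    · intro h
      have h3 : (k : ℝ) + ((n : ℝ) + 1) * γ < (n : ℝ) + 1 := by
        have hub := hAub n
        have : ((k + A n : ℕ) : ℝ) ≤ (n : ℝ) := by exact_mod_cast h
        push_cast at this
        linarith
      have h2 : (k : ℝ) < ((n : ℝ) + 1) * (1 - γ) := by nlinarith
      have h1 := key.mpr h2
      have : ⌊(k : ℝ) * φ ^ 2⌋₊ < n + 1 :=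
        (Nat.floor_lt (by positivity)).mpr (by push_cast; linarith)
      omega
  have hUL : ∀ k : ℕ, U k = L k + k := by
    intro k
    rw [hU, hL]
    have e : (k : ℝ) * φ ^ 2 = (k : ℝ) * φ + (k : ℕ) := by rw [hφ2]; push_cast; ring
    rw [e, Nat.floor_add_natCast (by positivity)]
  have hAle : ∀ n : ℕ, A n ≤ n := by
    intro n
    have h1 : ((n : ℝ) + 1) * γ < ((n + 1 : ℕ) : ℝ) := by push_cast; nlinarith
    have h2 := (Nat.floor_lt (show (0:ℝ) ≤ ((n : ℝ) + 1) * γ by positivity)).mpr h1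
    have h3 : A n = ⌊((n : ℝ) + 1) * γ⌋₊ := rfl
    omega
  have hAstep : ∀ n : ℕ, A n ≤ A (n + 1) ∧ A (n + 1) ≤ A n + 1 := by
    intro n
    constructor
    · apply Nat.floor_le_floor
      push_cast
      nlinarith
    · have h1 : (((n + 1 : ℕ) : ℝ) + 1) * γ < ((A n + 2 : ℕ) : ℝ) := by
        have := hAub n; push_cast; push_cast at this; nlinarith
      have h2 := (Nat.floor_lt (show (0:ℝ) ≤ (((n + 1 : ℕ) : ℝ) + 1) * γ by positivity)).mpr h1
      have h3 : A (n + 1) = ⌊(((n + 1 : ℕ) : ℝ) + 1) * γ⌋₊ := rfl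
      omega
  -- main induction
  have main : ∀ n : ℕ, ∑ i ∈ Finset.range (n + 1), W i = (n + 1) * A n := by
    intro n
    induction n with
    | zero =>
        have h0 : A 0 = 0 := Nat.floor_eq_zero.mpr (by norm_num; exact hγ1)
        simp [hW0, h0]
    | succ n ih =>
        rw [Finset.sum_range_succ, ih]
        rcases (hAstep n) with ⟨hlo, hhi⟩
        rcases Nat.lt_or_ge (A n) (A (n + 1)) with hc | hc
        · -- A (n+1) = A n + 1, so n+1 = L (A n + 1)
          have hAeq : A (n + 1) = A n + 1 := by omega
          have hLk : L (A n + 1) = n + 1 := by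
            have h1 : L (A n + 1) ≤ n + 1 := (hLchar (A n + 1) (n + 1)).mpr (by omega)
            have h2 : ¬ L (A n + 1) ≤ n := fun h => by have := (hLchar (A n + 1) n).mp h; omega
            omega
          have hWn : W (n + 1) = n + 1 + (A n + 1) := by
            rw [← hLk, hWL (A n + 1) (by omega), hUL, hLk]
          rw [hWn, hAeq]
          ring
        · -- A (n+1) = A n, so n+1 = U (n + 1 - A n)
          have hAeq : A (n + 1) = A n := by omega
          have hkA : (n + 1 - A n) + A n = n + 1 := by have := hAle n; omega
          have hUk : U (n + 1 - A n) = n + 1 := by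
            have h1 : U (n + 1 - A n) ≤ n + 1 := (hUchar (n + 1 - A n) (n + 1)).mpr (by omega)
            have h2 : ¬ U (n + 1 - A n) ≤ n := fun h => by
              have := (hUchar (n + 1 - A n) n).mp h; omega
            omega
          have hWn : W (n + 1) = A n := by
            have := hWU (n + 1 - A n) (by have := hAle n; omega)
            rw [hUk] at this
            have hul := hUL (n + 1 - A n)
            rw [hUk] at hul
            omega
          rw [hWn, hAeq]
          ring
  exact main
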